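/- Let $A, B \in M_2(\mathbb{Z})$ be matrices all of whose entries lie in $\{0,1\}$. Then $A$ and $B$ generate $M_2(\mathbb{Z})$ as a ring if and only if their reductions modulo $2$ generate $M_2(\mathbb{F}_2)$ as an $\mathbb{F}_2$-algebra. -/

import Mathlib

open Matrix Submodule

section general

variable {R : Type*} [CommRing R]

/-- The 4×4 matrix whose rows are the coordinates of `1, A, B, A*B`. -/
def rowsM (A B : Matrix (Fin 2) (Fin 2) R) : Matrix (Fin 4) (Fin 4) R :=
  !![1, 0, 0, 1;
     A 0 0, A 0 1, A 1 0, A 1 1;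
     B 0 0, B 0 1, B 1 0, B 1 1;
     (A*B) 0 0, (A*B) 0 1, (A*B) 1 0, (A*B) 1 1]

/-- Coordinates of a 2×2 matrix. -/
def coordsEquiv : Matrix (Fin 2) (Fin 2) R ≃ₗ[R] (Fin 4 → R) where
  toFun m := ![m 0 0, m 0 1, m 1 0, m 1 1]
  invFun f := !![f 0, f 1; f 2, f 3]
  map_add' x y := by funext i; fin_cases i <;> simp
  map_smul' c x := by funext i; fin_cases i <;> simp
  left_inv m := by ext i j; fin_cases i <;> fin_cases j <;> simp
  right_inv f := by funext i; fin_cases i <;> simp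

lemma mem_span4 {A B x : Matrix (Fin 2) (Fin 2) R} {c0 c1 c2 c3 : R}
    (h : x = c0 • (1 : Matrix (Fin 2) (Fin 2) R) + c1 • A + c2 • B + c3 • (A*B)) :
    x ∈ span R ({1, A, B, A*B} : Set (Matrix (Fin 2) (Fin 2) R)) := by
  have m1 : (1 : Matrix (Fin 2) (Fin 2) R) ∈ ({1, A, B, A*B} : Set _) := by simp
  have mA : A ∈ ({1, A, B, A*B} : Set (Matrix (Fin 2) (Fin 2) R)) := by simp
  have mB : B ∈ ({1, A, B, A*B} : Set (Matrix (Fin 2) (Fin 2) R)) := by simp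
  have mAB : A*B ∈ ({1, A, B, A*B} : Set (Matrix (Fin 2) (Fin 2) R)) := by simp
  rw [h]
  exact add_mem (add_mem (add_mem (smul_mem _ _ (subset_span m1))
    (smul_mem _ _ (subset_span mA))) (smul_mem _ _ (subset_span mB)))
    (smul_mem _ _ (subset_span mAB))

lemma adjoin_eq_top_iff_span (A B : Matrix (Fin 2) (Fin 2) R) :
    Algebra.adjoin R {A, B} = ⊤ ↔
      span R ({1, A, B, A*B} : Set (Matrix (Fin 2) (Fin 2) R)) = ⊤ := by
  set p := span R ({1, A, B, A*B} : Set (Matrix (Fin 2) (Fin 2) R)) with hp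
  have hmulgen : ∀ x ∈ ({1, A, B, A*B} : Set (Matrix (Fin 2) (Fin 2) R)),
      ∀ y ∈ ({1, A, B, A*B} : Set (Matrix (Fin 2) (Fin 2) R)), x * y ∈ p := by
    have e1 : ∀ i j, (A*B) i j = A i 0 * B 0 j + A i 1 * B 1 j := by
      intro i j; simp [Matrix.mul_apply, Fin.sum_univ_two]
    intro x hx y hy
    simp only [Set.mem_insert_iff, Set.mem_singleton_iff] at hx hy
    rcases hx with h|h|h|h <;> rcases hy with h'|h'|h'|h' <;> rw [h, h']
    all_goals first
      | (rw [one_mul]; exact subset_span (by simp))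
      | (rw [mul_one]; exact subset_span (by simp))
      | skip
    -- A*A
    · exact mem_span4 (c0 := -(A 0 0 * A 1 1 - A 0 1 * A 1 0)) (c1 := A 0 0 + A 1 1)
        (c2 := 0) (c3 := 0) (by
          ext i j; fin_cases i <;> fin_cases j <;>
            simp [Matrix.mul_apply, Fin.sum_univ_two, Matrix.one_apply] <;> ring)
    -- A*B
    · exact subset_span (by simp)
    -- A*(A*B)
    · exact mem_span4 (c0 := 0) (c1 := 0)
        (c2 := -(A 0 0 * A 1 1 - A 0 1 * A 1 0)) (c3 := A 0 0 + A 1 1) (by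
          ext i j; fin_cases i <;> fin_cases j <;>
            simp [Matrix.mul_apply, Fin.sum_univ_two, Matrix.one_apply] <;> ring)
    -- B*A
    · exact mem_span4
        (c0 := (A 0 0 * B 0 0 + A 0 1 * B 1 0 + A 1 0 * B 0 1 + A 1 1 * B 1 1)
          - (A 0 0 + A 1 1) * (B 0 0 + B 1 1))
        (c1 := B 0 0 + B 1 1) (c2 := A 0 0 + A 1 1) (c3 := -1) (by
          ext i j; fin_cases i <;> fin_cases j <;>
            simp [Matrix.mul_apply, Fin.sum_univ_two, Matrix.one_apply] <;> ring)
    -- B*B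
    · exact mem_span4 (c0 := -(B 0 0 * B 1 1 - B 0 1 * B 1 0)) (c1 := 0)
        (c2 := B 0 0 + B 1 1) (c3 := 0) (by
          ext i j; fin_cases i <;> fin_cases j <;>
            simp [Matrix.mul_apply, Fin.sum_univ_two, Matrix.one_apply] <;> ring)
    -- B*(A*B)
    · exact mem_span4
        (c0 := -(A 0 0 + A 1 1) * (B 0 0 * B 1 1 - B 0 1 * B 1 0))
        (c1 := B 0 0 * B 1 1 - B 0 1 * B 1 0)
        (c2 := A 0 0 * B 0 0 + A 0 1 * B 1 0 + A 1 0 * B 0 1 + A 1 1 * B 1 1)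
        (c3 := 0) (by
          ext i j; fin_cases i <;> fin_cases j <;>
            simp [Matrix.mul_apply, Fin.sum_univ_two, Matrix.one_apply] <;> ring)
    -- (A*B)*A
    · exact mem_span4
        (c0 := -(B 0 0 + B 1 1) * (A 0 0 * A 1 1 - A 0 1 * A 1 0))
        (c1 := A 0 0 * B 0 0 + A 0 1 * B 1 0 + A 1 0 * B 0 1 + A 1 1 * B 1 1)
        (c2 := A 0 0 * A 1 1 - A 0 1 * A 1 0) (c3 := 0) (by
          ext i j; fin_cases i <;> fin_cases j <;>
            simp [Matrix.mul_apply, Fin.sum_univ_two, Matrix.one_apply] <;> ring)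
    -- (A*B)*B
    · exact mem_span4 (c0 := 0) (c1 := -(B 0 0 * B 1 1 - B 0 1 * B 1 0)) (c2 := 0)
        (c3 := B 0 0 + B 1 1) (by
          ext i j; fin_cases i <;> fin_cases j <;>
            simp [Matrix.mul_apply, Fin.sum_univ_two, Matrix.one_apply] <;> ring)
    -- (A*B)*(A*B)
    · exact mem_span4
        (c0 := -(A 0 0 * A 1 1 - A 0 1 * A 1 0) * (B 0 0 * B 1 1 - B 0 1 * B 1 0))
        (c1 := 0) (c2 := 0)
        (c3 := A 0 0 * B 0 0 + A 0 1 * B 1 0 + A 1 0 * B 0 1 + A 1 1 * B 1 1) (by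
          ext i j; fin_cases i <;> fin_cases j <;>
            simp [Matrix.mul_apply, Fin.sum_univ_two, Matrix.one_apply] <;> ring)
  have hmul : ∀ x y, x ∈ p → y ∈ p → x * y ∈ p := by
    intro x y hx hy
    induction hx using Submodule.span_induction with
    | mem z hz =>
      induction hy using Submodule.span_induction with
      | mem w hw => exact hmulgen z hz w hw
      | zero => rw [mul_zero]; exact zero_mem p
      | add a b _ _ ha hb => rw [mul_add]; exact add_mem ha hb
      | smul c a _ ha => rw [mul_smul_comm]; exact smul_mem _ _ ha
    | zero => rw [zero_mul]; exact zero_mem p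
    | add a b _ _ ha hb => rw [add_mul]; exact add_mem ha hb
    | smul c a _ ha => rw [smul_mul_assoc]; exact smul_mem _ _ ha
  have h1 : (1 : Matrix (Fin 2) (Fin 2) R) ∈ p := subset_span (by simp)
  have key : Subalgebra.toSubmodule (Algebra.adjoin R {A, B}) = p := by
    apply le_antisymm
    · have : Algebra.adjoin R {A, B} ≤ p.toSubalgebra h1 hmul := by
        rw [Algebra.adjoin_le_iff]
        rintro x (rfl|rfl)
        · exact subset_span (by simp)
        · exact subset_span (by simp)
      exact this
    · rw [span_le]
      intro x hx
      simp only [Set.mem_insert_iff, Set.mem_singleton_iff] at hx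
      simp only [SetLike.mem_coe, Subalgebra.mem_toSubmodule]
      rcases hx with rfl|rfl|rfl|rfl
      · exact one_mem _
      · exact Algebra.subset_adjoin (by simp)
      · exact Algebra.subset_adjoin (by simp)
      · exact mul_mem (Algebra.subset_adjoin (by simp)) (Algebra.subset_adjoin (by simp))
  rw [← key, Algebra.toSubmodule_eq_top]

lemma span_eq_top_iff_isUnit (A B : Matrix (Fin 2) (Fin 2) R) :
    span R ({1, A, B, A*B} : Set (Matrix (Fin 2) (Fin 2) R)) = ⊤ ↔
      IsUnit (rowsM A B).det := by
  rw [← Matrix.isUnit_iff_isUnit_det, ← Matrix.vecMul_surjective_iff_isUnit]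
  have hsurj : Function.Surjective (rowsM A B).vecMul ↔
      LinearMap.range (rowsM A B).vecMulLinear = ⊤ := by
    rw [LinearMap.range_eq_top]
    constructor <;> intro h <;> convert h using 2 <;>
      funext v <;> simp [Matrix.vecMulLinear_apply]
  rw [hsurj, range_vecMulLinear]
  have himg : (coordsEquiv : Matrix (Fin 2) (Fin 2) R ≃ₗ[R] (Fin 4 → R)) ''
      ({1, A, B, A*B} : Set (Matrix (Fin 2) (Fin 2) R)) = Set.range (rowsM A B) := by
    ext f
    simp only [Set.image_insert_eq, Set.image_singleton, Set.mem_insert_iff,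
      Set.mem_singleton_iff, Set.mem_range]
    constructor
    · rintro (rfl|rfl|rfl|rfl)
      · exact ⟨0, by funext j; fin_cases j <;> simp [coordsEquiv, rowsM, Matrix.one_apply]⟩
      · exact ⟨1, by funext j; fin_cases j <;> simp [coordsEquiv, rowsM]⟩
      · exact ⟨2, by funext j; fin_cases j <;> simp [coordsEquiv, rowsM]⟩
      · exact ⟨3, by funext j; fin_cases j <;> simp [coordsEquiv, rowsM]⟩
    · rintro ⟨i, rfl⟩
      fin_cases i
      · left; funext j; fin_cases j <;> simp [coordsEquiv, rowsM, Matrix.one_apply]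
      · right; left; funext j; fin_cases j <;> simp [coordsEquiv, rowsM]
      · right; right; left; funext j; fin_cases j <;> simp [coordsEquiv, rowsM]
      · right; right; right; funext j; fin_cases j <;> simp [coordsEquiv, rowsM]
  rw [show (rowsM A B).row = rowsM A B from rfl, ← himg, ← LinearEquiv.coe_coe, ← Submodule.map_span,
    LinearMap.map_eq_top_iff (LinearEquiv.range coordsEquiv), LinearMap.ker_eq_bot_of_injective coordsEquiv.injective, sup_bot_eq]

end general

lemma det4 {R : Type*} [CommRing R] (m00 m01 m02 m03 m10 m11 m12 m13 m20 m21 m22 m23 m30 m31 m32 m33 : R) :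
    (!![m00, m01, m02, m03; m10, m11, m12, m13; m20, m21, m22, m23; m30, m31, m32, m33]).det =
      m00*m11*m22*m33 - m00*m11*m23*m32 - m00*m12*m21*m33 + m00*m12*m23*m31 + m00*m13*m21*m32 - m00*m13*m22*m31 - m01*m10*m22*m33 + m01*m10*m23*m32 + m01*m12*m20*m33 - m01*m12*m23*m30 - m01*m13*m20*m32 + m01*m13*m22*m30 + m02*m10*m21*m33 - m02*m10*m23*m31 - m02*m11*m20*m33 + m02*m11*m23*m30 + m02*m13*m20*m31 - m02*m13*m21*m30 - m03*m10*m21*m32 + m03*m10*m22*m31 + m03*m11*m20*m32 - m03*m11*m22*m30 - m03*m12*m20*m31 + m03*m12*m21*m30 := by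
  simp [Matrix.det_succ_row_zero, Fin.sum_univ_succ, Fin.succAbove]
  ring

lemma zeroone_det (a b c d e f g h : ℤ)
    (ha : a = 0 ∨ a = 1) (hb : b = 0 ∨ b = 1) (hc : c = 0 ∨ c = 1) (hd : d = 0 ∨ d = 1)
    (he : e = 0 ∨ e = 1) (hf : f = 0 ∨ f = 1) (hg : g = 0 ∨ g = 1) (hh : h = 0 ∨ h = 1)
    (hodd : ¬ (2 ∣ (!![1, 0, 0, 1;
     a, b, c, d;
     e, f, g, h;
     a*e+b*g, a*f+b*h, c*e+d*g, c*f+d*h] : Matrix (Fin 4) (Fin 4) ℤ).det)) :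
    IsUnit (!![1, 0, 0, 1;
     a, b, c, d;
     e, f, g, h;
     a*e+b*g, a*f+b*h, c*e+d*g, c*f+d*h] : Matrix (Fin 4) (Fin 4) ℤ).det := by
  rw [det4] at hodd ⊢
  rw [Int.isUnit_iff]
  rcases ha with rfl|rfl <;> rcases hb with rfl|rfl <;> rcases hc with rfl|rfl <;>
    rcases hd with rfl|rfl <;> rcases he with rfl|rfl <;> rcases hf with rfl|rfl <;>
    rcases hg with rfl|rfl <;> rcases hh with rfl|rfl <;>
    revert hodd <;> decide

theorem stmt_16 (A B : Matrix (Fin 2) (Fin 2) ℤ)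
    (hA : ∀ i j, A i j = 0 ∨ A i j = 1) (hB : ∀ i j, B i j = 0 ∨ B i j = 1) :
    Algebra.adjoin ℤ {A, B} = ⊤ ↔
      Algebra.adjoin (ZMod 2)
        {A.map (fun x => (x : ZMod 2)), B.map (fun x => (x : ZMod 2))} = ⊤ := by
  have hmap : (A.map (fun x => (x : ZMod 2))) * (B.map (fun x => (x : ZMod 2))) =
      (A*B).map (fun x => (x : ZMod 2)) := by
    ext i j
    simp [Matrix.mul_apply, Matrix.map_apply, Fin.sum_univ_two]
  have hrows : rowsM (A.map (fun x => (x : ZMod 2))) (B.map (fun x => (x : ZMod 2))) =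
      (rowsM A B).map (fun x : ℤ => (x : ZMod 2)) := by
    ext i j
    fin_cases i <;> fin_cases j <;>
      simp [rowsM, hmap, Matrix.map_apply]
  have hdet : (rowsM (A.map (fun x => (x : ZMod 2))) (B.map (fun x => (x : ZMod 2)))).det =
      ((rowsM A B).det : ZMod 2) := by
    rw [hrows,
      show (rowsM A B).map (fun x : ℤ => (x : ZMod 2)) =
        (Int.castRingHom (ZMod 2)).mapMatrix (rowsM A B) from rfl,
      ← RingHom.map_det]
    rfl
  rw [adjoin_eq_top_iff_span, adjoin_eq_top_iff_span, span_eq_top_iff_isUnit,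
    span_eq_top_iff_isUnit, hdet]
  have hform : rowsM A B =
      !![1, 0, 0, 1;
        A 0 0, A 0 1, A 1 0, A 1 1;
        B 0 0, B 0 1, B 1 0, B 1 1;
        A 0 0 * B 0 0 + A 0 1 * B 1 0, A 0 0 * B 0 1 + A 0 1 * B 1 1,
        A 1 0 * B 0 0 + A 1 1 * B 1 0, A 1 0 * B 0 1 + A 1 1 * B 1 1] := by
    ext i j
    fin_cases i <;> fin_cases j <;> simp [rowsM, Matrix.mul_apply, Fin.sum_univ_two]
  constructor
  · intro h
    rw [Int.isUnit_iff] at h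
    rcases h with h | h <;> rw [h]
    · simp
    · rw [isUnit_iff_ne_zero]
      intro hz
      rw [show ((-1 : ℤ) : ZMod 2) = 1 by decide] at hz
      exact one_ne_zero hz
  · intro h
    rw [isUnit_iff_ne_zero, Ne, ZMod.intCast_zmod_eq_zero_iff_dvd] at h
    rw [hform] at h ⊢
    exact zeroone_det (A 0 0) (A 0 1) (A 1 0) (A 1 1) (B 0 0) (B 0 1) (B 1 0) (B 1 1)
      (hA 0 0) (hA 0 1) (hA 1 0) (hA 1 1) (hB 0 0) (hB 0 1) (hB 1 0) (hB 1 1) h
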